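/- For each k ∈ {29, 30, 31}, up to projective equivalence there is exactly one cap of size k in PG(5,2): any two caps of size k are projectively equivalent, and every such cap is incomplete (it extends by some nonzero vector to a larger cap). -/

import Mathlib

/-- The ambient 6-dimensional vector space over GF(2). -/
abbrev V : Type := Fin 6 → ZMod 2

/-- A cap in PG(5,2): a finite set of nonzero vectors of `V` no three pairwise
distinct elements of which sum to `0`. -/
def IsCap (S : Set V) : Prop :=
  S.Finite ∧ (∀ v ∈ S, v ≠ 0) ∧
    ∀ a ∈ S, ∀ b ∈ S, ∀ c ∈ S, a ≠ b → a ≠ c → b ≠ c → a + b + c ≠ 0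

/-- A cap is complete if it cannot be extended by any nonzero vector. -/
def IsCompleteCap (S : Set V) : Prop :=
  IsCap S ∧ ∀ v : V, v ≠ 0 → v ∉ S → ¬ IsCap (insert v S)

/-- Projective equivalence of caps: some linear automorphism of `V` maps one onto the other. -/
def ProjEquiv (S T : Set V) : Prop :=
  ∃ A : V ≃ₗ[ZMod 2] V, ⇑A '' S = T

/-- The `i`-th standard basis vector of `V`. -/
def e (i : Fin 6) : V := Pi.single i 1

open Finset

def Dot (u v : V) : ZMod 2 := ∑ i, u i * v i
lemma zmod2_cases : ∀ x : ZMod 2, x = 0 ∨ x = 1 := by decide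
lemma Vadd_self (v : V) : v + v = 0 := by funext i; exact CharTwo.add_self_eq_zero _
lemma Vadd_cancel (a b : V) : a + (a + b) = b := by rw [← add_assoc, Vadd_self, zero_add]
lemma dot_add_right (u a b : V) : Dot u (a + b) = Dot u a + Dot u b := by
  simp [Dot, mul_add, Finset.sum_add_distrib]
lemma dot_comm (u v : V) : Dot u v = Dot v u := by simp [Dot, mul_comm]
lemma dot_add_left (u w a : V) : Dot (u + w) a = Dot u a + Dot w a := by
  rw [dot_comm, dot_add_right, dot_comm a u, dot_comm a w]
lemma dot_zero_right (u : V) : Dot u 0 = 0 := by simp [Dot]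
lemma dot_zero_left (v : V) : Dot 0 v = 0 := by simp [Dot]
lemma dot_e (i : Fin 6) (v : V) : Dot (e i) v = v i := by
  simp [Dot, e, Pi.single_apply, ite_mul]
lemma exists_dot_one {v : V} (hv : v ≠ 0) : ∃ u : V, Dot u v = 1 := by
  have : ∃ i, v i ≠ 0 := by
    by_contra h; push_neg at h; exact hv (funext fun i => h i)
  obtain ⟨i, hi⟩ := this
  refine ⟨e i, ?_⟩; rw [dot_e]
  rcases zmod2_cases (v i) with h | h
  · exact absurd h hi
  · exact h
lemma card_V : Fintype.card V = 64 := by simp [Fintype.card_fun]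

-- translation bijection between two filter sets
lemma card_filter_translate (p q : V → Prop) [DecidablePred p] [DecidablePred q] (w : V)
    (hpq : ∀ v, p v → q (v + w)) (hqp : ∀ v, q v → p (v + w)) :
    (univ.filter p).card = (univ.filter q).card := by
  apply Finset.card_bij (fun v _ => v + w)
  · intro v hv
    simp only [mem_filter, mem_univ, true_and] at hv ⊢
    exact hpq v hv
  · intro a ha b hb hab
    exact add_right_cancel hab
  · intro b hb
    simp only [mem_filter, mem_univ, true_and] at hb ⊢
    exact ⟨b + w, hqp b hb, by rw [add_assoc, Vadd_self, add_zero]⟩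

lemma card_dot0 {u : V} (hu : u ≠ 0) :
    (univ.filter fun v : V => Dot u v = 0).card = 32 := by
  obtain ⟨w', hw'⟩ := exists_dot_one hu
  have hw : Dot u w' = 1 := by rw [dot_comm]; exact hw'
  have h1 : (univ.filter fun v : V => Dot u v = 0).card
      = (univ.filter fun v : V => Dot u v = 1).card := by
    apply card_filter_translate _ _ w'
    · intro v hv; rw [dot_add_right, hv, hw, zero_add]
    · intro v hv; rw [dot_add_right, hv, hw]; decide
  have h2 : (univ.filter fun v : V => Dot u v = 0).card
      + (univ.filter fun v : V => ¬ (Dot u v = 0)).card = 64 := by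
    rw [Finset.card_filter_add_card_filter_not]
    rw [Finset.card_univ, card_V]
  have h3 : (univ.filter fun v : V => ¬ (Dot u v = 0)).card
      = (univ.filter fun v : V => Dot u v = 1).card := by
    apply Finset.card_bij (fun v _ => v) <;> intro a ha
    · simp only [mem_filter, mem_univ, true_and] at ha ⊢
      rcases zmod2_cases (Dot u a) with h | h
      · exact absurd h ha
      · exact h
    · intro b hb hab; exact hab
    · simp only [mem_filter, mem_univ, true_and] at ha
      refine ⟨a, ?_, rfl⟩
      simp only [mem_filter, mem_univ, true_and, ha]
      decide
  omega

lemma card_dot1 {u : V} (hu : u ≠ 0) :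
    (univ.filter fun v : V => Dot u v = 1).card = 32 := by
  obtain ⟨w', hw'⟩ := exists_dot_one hu
  have hw : Dot u w' = 1 := by rw [dot_comm]; exact hw'
  have h1 : (univ.filter fun v : V => Dot u v = 0).card
      = (univ.filter fun v : V => Dot u v = 1).card := by
    apply card_filter_translate _ _ w'
    · intro v hv; rw [dot_add_right, hv, hw, zero_add]
    · intro v hv; rw [dot_add_right, hv, hw]; decide
  rw [← h1, card_dot0 hu]

lemma zmod2_add_eq : ∀ a b : ZMod 2, a + b = 1 → a = 1 → b = 0 := by decide

/-- existence of a functional separating s from t -/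
lemma exists_dot_10 {s t : V} (hs : s ≠ 0) (ht : t ≠ 0) (hst : s ≠ t) :
    ∃ u : V, Dot u s = 1 ∧ Dot u t = 0 := by
  have hstn : s + t ≠ 0 := by
    intro h
    apply hst
    have := Vadd_cancel s t
    rw [h, add_zero] at this
    exact this
  obtain ⟨u1', hu1'⟩ := exists_dot_one hstn
  have hu1 : Dot u1' s + Dot u1' t = 1 := by
    rw [← dot_add_right]; exact hu1'
  obtain ⟨us', hus'⟩ := exists_dot_one hs
  have hus : Dot us' s = 1 := hus'
  rcases zmod2_cases (Dot u1' s) with h1s | h1s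
  · -- Dot u1' t = 1
    have h1t : Dot u1' t = 1 := by rw [h1s, zero_add] at hu1; exact hu1
    rcases zmod2_cases (Dot us' t) with hut | hut
    · exact ⟨us', hus, hut⟩
    · refine ⟨us' + u1', ?_, ?_⟩
      · rw [dot_add_left, hus, h1s, add_zero]
      · rw [dot_add_left, hut, h1t]; decide
  · have h1t : Dot u1' t = 0 := zmod2_add_eq _ _ hu1 h1s
    exact ⟨u1', h1s, h1t⟩

lemma card_dot_pair {s t : V} (hs : s ≠ 0) (ht : t ≠ 0) (hst : s ≠ t) :
    (univ.filter fun u : V => Dot u s = 0 ∧ Dot u t = 0).card = 16 := by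
  obtain ⟨u01, h01t, h01s⟩ := exists_dot_10 ht hs (Ne.symm hst)
  -- u01 : Dot u01 t = 1, Dot u01 s = 0
  have hbase : (univ.filter fun u : V => Dot (u) s = 0).card = 32 := by
    have := card_dot0 hs
    rw [← this]
    apply Finset.card_nbij id (by intro a ha; simpa [dot_comm] using ha)
      (by intro a _ b _ h; exact h)
    · intro b hb
      simp only [Set.mem_image, Finset.coe_filter, Set.mem_setOf_eq] at hb ⊢
      exact ⟨b, by simpa [dot_comm] using hb, rfl⟩
  -- split base by value of Dot u t
  have hsplit : (univ.filter fun u : V => Dot u s = 0 ∧ Dot u t = 0).card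
      + (univ.filter fun u : V => Dot u s = 0 ∧ ¬ (Dot u t = 0)).card = 32 := by
    rw [← hbase, ← Finset.filter_filter, ← Finset.filter_filter,
      Finset.card_filter_add_card_filter_not]
  -- the two halves are equinumerous via translation by u01
  have heq : (univ.filter fun u : V => Dot u s = 0 ∧ Dot u t = 0).card
      = (univ.filter fun u : V => Dot u s = 0 ∧ ¬ (Dot u t = 0)).card := by
    apply card_filter_translate _ _ u01
    · rintro v ⟨hv1, hv2⟩
      constructor
      · rw [dot_add_left, hv1, h01s, add_zero]
      · rw [dot_add_left, hv2, h01t]; decide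
    · rintro v ⟨hv1, hv2⟩
      have hv2' : Dot v t = 1 := by
        rcases zmod2_cases (Dot v t) with h | h
        · exact absurd h hv2
        · exact h
      constructor
      · rw [dot_add_left, hv1, h01s, add_zero]
      · rw [dot_add_left, hv2', h01t]; decide
  omega

/-- count of nonzero functionals vanishing on a fixed nonzero vector -/
lemma card_dot0_erase {s : V} (hs : s ≠ 0) :
    ((univ.erase (0:V)).filter fun u => Dot u s = 0).card = 31 := by
  have h1 : ((univ.erase (0:V)).filter fun u => Dot u s = 0)
      = (univ.filter fun u : V => Dot u s = 0).erase 0 := by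
    rw [Finset.filter_erase]
  have h0 : (0:V) ∈ univ.filter fun u : V => Dot u s = 0 := by
    simp [dot_zero_left]
  have hbase : (univ.filter fun u : V => Dot u s = 0).card = 32 := by
    have := card_dot0 hs
    rw [← this]
    apply Finset.card_nbij id (by intro a ha; simpa [dot_comm] using ha)
      (by intro a _ b _ h; exact h)
    · intro b hb
      simp only [Set.mem_image, Finset.coe_filter, Set.mem_setOf_eq] at hb ⊢
      exact ⟨b, by simpa [dot_comm] using hb, rfl⟩
  rw [h1, Finset.card_erase_of_mem h0, hbase]

lemma card_dot_pair_erase {s t : V} (hs : s ≠ 0) (ht : t ≠ 0) (hst : s ≠ t) :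
    ((univ.erase (0:V)).filter fun u => Dot u s = 0 ∧ Dot u t = 0).card = 15 := by
  have h1 : ((univ.erase (0:V)).filter fun u => Dot u s = 0 ∧ Dot u t = 0)
      = (univ.filter fun u : V => Dot u s = 0 ∧ Dot u t = 0).erase 0 := by
    rw [Finset.filter_erase]
  have h0 : (0:V) ∈ univ.filter fun u : V => Dot u s = 0 ∧ Dot u t = 0 := by
    simp [dot_zero_left]
  rw [h1, Finset.card_erase_of_mem h0, card_dot_pair hs ht hst]

lemma sum_h (S : Finset V) (hS0 : ∀ s ∈ S, s ≠ 0) :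
    ∑ u ∈ univ.erase (0:V), (S.filter fun s => Dot u s = 0).card = 31 * S.card := by
  have : ∀ u : V, (S.filter fun s => Dot u s = 0).card
      = ∑ s ∈ S, if Dot u s = 0 then 1 else 0 := by
    intro u; rw [Finset.card_filter]
  simp_rw [this]
  rw [Finset.sum_comm]
  have : ∀ s ∈ S, (∑ u ∈ univ.erase (0:V), if Dot u s = 0 then 1 else 0) = 31 := by
    intro s hs
    rw [← Finset.card_filter]
    exact card_dot0_erase (hS0 s hs)
  rw [Finset.sum_congr rfl this, Finset.sum_const, smul_eq_mul, mul_comm]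

lemma sum_h_sq (S : Finset V) (hS0 : ∀ s ∈ S, s ≠ 0) :
    ∑ u ∈ univ.erase (0:V),
      (S.filter fun s => Dot u s = 0).card * (S.filter fun s => Dot u s = 0).card
      = 15 * S.card * S.card + 16 * S.card := by
  have hcard : ∀ u : V, (S.filter fun s => Dot u s = 0).card
      = ∑ s ∈ S, if Dot u s = 0 then 1 else 0 := by
    intro u; rw [Finset.card_filter]
  have hmul : ∀ u : V, (S.filter fun s => Dot u s = 0).card * (S.filter fun s => Dot u s = 0).card
      = ∑ s ∈ S, ∑ t ∈ S, if (Dot u s = 0 ∧ Dot u t = 0) then 1 else 0 := by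
    intro u
    rw [hcard, Finset.sum_mul_sum]
    apply Finset.sum_congr rfl; intro s _
    apply Finset.sum_congr rfl; intro t _
    by_cases h1 : Dot u s = 0 <;> by_cases h2 : Dot u t = 0 <;> simp [h1, h2]
  simp_rw [hmul]
  rw [Finset.sum_comm]
  have hswap : ∀ s ∈ S, (∑ u ∈ univ.erase (0:V), ∑ t ∈ S, if (Dot u s = 0 ∧ Dot u t = 0) then 1 else 0)
      = ∑ t ∈ S, ∑ u ∈ univ.erase (0:V), (if (Dot u s = 0 ∧ Dot u t = 0) then 1 else 0) := by
    intro s _; rw [Finset.sum_comm]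
  rw [Finset.sum_congr rfl hswap]
  have hinner : ∀ s ∈ S, ∀ t ∈ S,
      (∑ u ∈ univ.erase (0:V), if (Dot u s = 0 ∧ Dot u t = 0) then 1 else 0)
      = if s = t then 31 else 15 := by
    intro s hs t ht
    rw [← Finset.card_filter]
    by_cases hst : s = t
    · subst hst
      simp only [if_pos rfl]
      have : ((univ.erase (0:V)).filter fun u => Dot u s = 0 ∧ Dot u s = 0)
          = ((univ.erase (0:V)).filter fun u => Dot u s = 0) := by
        apply Finset.filter_congr; intro u _; simp
      rw [this]
      exact card_dot0_erase (hS0 s hs)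
    · rw [if_neg hst]
      exact card_dot_pair_erase (hS0 s hs) (hS0 t ht) hst
  have : ∀ s ∈ S, (∑ t ∈ S, ∑ u ∈ univ.erase (0:V), (if (Dot u s = 0 ∧ Dot u t = 0) then 1 else 0))
      = 15 * S.card + 16 := by
    intro s hs
    rw [Finset.sum_congr rfl (fun t ht => hinner s hs t ht)]
    have : ∀ t ∈ S, (if s = t then 31 else 15) = 15 + (if t = s then 16 else 0) := by
      intro t _
      by_cases h : s = t
      · subst h; simp
      · rw [if_neg h, if_neg (Ne.symm h)]
    rw [Finset.sum_congr rfl this, Finset.sum_add_distrib, Finset.sum_const, smul_eq_mul,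
      Finset.sum_ite_eq' S s (fun _ => 16), if_pos hs, mul_comm]
  rw [Finset.sum_congr rfl this, Finset.sum_const, smul_eq_mul]
  ring

/-- Cap predicate for finsets -/
def CapF (F : Finset V) : Prop :=
  (∀ v ∈ F, v ≠ 0) ∧
    ∀ a ∈ F, ∀ b ∈ F, ∀ c ∈ F, a ≠ b → a ≠ c → b ≠ c → a + b + c ≠ 0

lemma capF_sum_not_mem {F : Finset V} (hF : CapF F) {a b : V} (ha : a ∈ F) (hb : b ∈ F)
    (hab : a ≠ b) : a + b ∉ F := by
  intro hc
  have hca : a + b ≠ a := by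
    intro h
    have : b = 0 := by
      have := Vadd_cancel a b
      rw [show a + (a+b) = (a+b) + a by ring, h] at this
      rw [← this]
      rw [Vadd_self]
    exact hF.1 b hb this
  have hcb : a + b ≠ b := by
    intro h
    have : a = 0 := by
      have := Vadd_cancel b a
      rw [show b + (b+a) = (a+b) + b by ring, h] at this
      rw [← this, Vadd_self]
    exact hF.1 a ha this
  apply hF.2 a ha b hb (a+b) hc hab (Ne.symm hca) (Ne.symm hcb)
  rw [Vadd_self]

/-- disjointness of a cap-subset and its translate -/
lemma cap_translate_disjoint {F : Finset V} (hF : CapF F) {G : Finset V} (hG : G ⊆ F)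
    {b : V} (hb : b ∈ F) : ∀ x ∈ G.image (· + b), x ∉ G := by
  intro x hx hxG
  simp only [Finset.mem_image] at hx
  obtain ⟨g, hg, rfl⟩ := hx
  by_cases hgb : g = b
  · subst hgb
    exact hF.1 _ (hG hxG) (Vadd_self g) |>.elim
  · exact capF_sum_not_mem hF (hG hg) hb hgb (hG hxG)

lemma card_union_le_filter {G J : Finset V} (p : V → Prop) [DecidablePred p]
    (hG : ∀ x ∈ G, p x) (hJ : ∀ x ∈ J, p x) (hdisj : ∀ x ∈ J, x ∉ G) :
    G.card + J.card ≤ (univ.filter p).card := by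
  have hsub : G ∪ J ⊆ univ.filter p := by
    intro x hx
    simp only [Finset.mem_union] at hx
    simp only [mem_filter, mem_univ, true_and]
    rcases hx with h | h
    · exact hG x h
    · exact hJ x h
  calc G.card + J.card = (G ∪ J).card + (G ∩ J).card := (Finset.card_union_add_card_inter G J).symm
    _ = (G ∪ J).card := by
        have : G ∩ J = ∅ := by
          rw [Finset.eq_empty_iff_forall_notMem]
          intro x hx
          rw [Finset.mem_inter] at hx
          exact hdisj x hx.2 hx.1
        rw [this, Finset.card_empty, add_zero]
    _ ≤ (univ.filter p).card := Finset.card_le_card hsub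

/-- a cap meets each hyperplane in at most 16 points -/
lemma capbound_ker {F : Finset V} (hF : CapF F) {u : V} (hu : u ≠ 0) :
    (F.filter fun s => Dot u s = 0).card ≤ 16 := by
  set B := F.filter fun s => Dot u s = 0 with hBdef
  rcases B.eq_empty_or_nonempty with hB | ⟨b, hb⟩
  · rw [hB]; simp
  have hbF : b ∈ F := (Finset.mem_filter.mp hb).1
  have hbd : Dot u b = 0 := (Finset.mem_filter.mp hb).2
  have himg : ∀ x ∈ B.image (· + b), Dot u x = 0 := by
    intro x hx
    simp only [Finset.mem_image] at hx
    obtain ⟨g, hg, rfl⟩ := hx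
    rw [dot_add_right, (Finset.mem_filter.mp hg).2, hbd, add_zero]
  have hdisj := cap_translate_disjoint hF (Finset.filter_subset _ F) hbF (G := B)
  have hkey := card_union_le_filter (fun v => Dot u v = 0)
    (fun x hx => (Finset.mem_filter.mp hx).2) himg hdisj
  rw [Finset.card_image_of_injective _ (fun x y h => by exact add_right_cancel h)] at hkey
  rw [card_dot0 hu] at hkey
  have hBe : (F.filter fun v => Dot u v = 0).card = B.card := rfl
  omega

/-- a cap meets the complement of each hyperplane in at most 16 points,
provided it meets the hyperplane -/
lemma capbound_aff {F : Finset V} (hF : CapF F) {u : V} (hu : u ≠ 0)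
    {b : V} (hbF : b ∈ F) (hbd : Dot u b = 0) :
    (F.filter fun s => Dot u s = 1).card ≤ 16 := by
  set A := F.filter fun s => Dot u s = 1 with hAdef
  have himg : ∀ x ∈ A.image (· + b), Dot u x = 1 := by
    intro x hx
    simp only [Finset.mem_image] at hx
    obtain ⟨g, hg, rfl⟩ := hx
    rw [dot_add_right, (Finset.mem_filter.mp hg).2, hbd, add_zero]
  have hdisj := cap_translate_disjoint hF (Finset.filter_subset _ F) hbF (G := A)
  have hkey := card_union_le_filter (fun v => Dot u v = 1)
    (fun x hx => (Finset.mem_filter.mp hx).2) himg hdisj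
  rw [Finset.card_image_of_injective _ (fun x y h => by exact add_right_cancel h)] at hkey
  rw [card_dot1 hu] at hkey
  have hAe : (F.filter fun v => Dot u v = 1).card = A.card := rfl
  omega

lemma card_erase_univ : (univ.erase (0:V)).card = 63 := by
  rw [Finset.card_erase_of_mem (Finset.mem_univ _), Finset.card_univ, card_V]

/-- the key counting step: some hyperplane is small for the cap -/
lemma exists_good_u {F : Finset V} (hF : CapF F) (hk1 : 29 ≤ F.card) (hk2 : F.card ≤ 31) :
    ∃ u : V, u ≠ 0 ∧ (F.filter fun s => Dot u s = 0).card + 16 ≤ F.card := by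
  by_contra hcon
  push_neg at hcon
  set k := F.card with hk
  -- lower and upper bounds on h u for every nonzero u
  have hbounds : ∀ u : V, u ≠ 0 → 14 ≤ (F.filter fun s => Dot u s = 0).card
      ∧ (F.filter fun s => Dot u s = 0).card ≤ 16 := by
    intro u hu
    have hup := capbound_ker hF hu
    have hlow := hcon u hu
    constructor
    · omega
    · exact hup
  -- integer computation
  have hsum1 := sum_h F hF.1
  have hsum2 := sum_h_sq F hF.1
  -- Q = ∑ (h-15)(h-16)
  have hQ : ∑ u ∈ univ.erase (0:V),
      (((F.filter fun s => Dot u s = 0).card : ℤ) - 15) * (((F.filter fun s => Dot u s = 0).card : ℤ) - 16)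
      = (15 * k * k + 16 * k : ℤ) - 31 * (31 * k) + 240 * 63 := by
    have hexp : ∀ u : V,
        (((F.filter fun s => Dot u s = 0).card : ℤ) - 15) * (((F.filter fun s => Dot u s = 0).card : ℤ) - 16)
        = ((F.filter fun s => Dot u s = 0).card : ℤ) * ((F.filter fun s => Dot u s = 0).card : ℤ)
          - 31 * ((F.filter fun s => Dot u s = 0).card : ℤ) + 240 := by
      intro u; ring
    rw [Finset.sum_congr rfl (fun u _ => hexp u)]
    rw [Finset.sum_add_distrib, Finset.sum_sub_distrib, ← Finset.mul_sum]
    rw [Finset.sum_const, card_erase_univ]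
    have c1 : ∑ u ∈ univ.erase (0:V),
        ((F.filter fun s => Dot u s = 0).card : ℤ) * ((F.filter fun s => Dot u s = 0).card : ℤ)
        = (15 * k * k + 16 * k : ℤ) := by
      have := congrArg (fun n : ℕ => (n:ℤ)) hsum2
      push_cast at this
      exact this
    have c2 : ∑ u ∈ univ.erase (0:V), ((F.filter fun s => Dot u s = 0).card : ℤ) = (31 * k : ℤ) := by
      have := congrArg (fun n : ℕ => (n:ℤ)) hsum1
      push_cast at this
      exact this
    rw [c1, c2]
    push_cast
    ring
  -- each term is at most 2
  have hQle : ∑ u ∈ univ.erase (0:V),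
      (((F.filter fun s => Dot u s = 0).card : ℤ) - 15) * (((F.filter fun s => Dot u s = 0).card : ℤ) - 16)
      ≤ 126 := by
    have : ∀ u ∈ univ.erase (0:V),
        (((F.filter fun s => Dot u s = 0).card : ℤ) - 15) * (((F.filter fun s => Dot u s = 0).card : ℤ) - 16)
        ≤ 2 := by
      intro u hu
      have hu0 : u ≠ 0 := (Finset.mem_erase.mp hu).1
      obtain ⟨hl, hr⟩ := hbounds u hu0
      set n := (F.filter fun s => Dot u s = 0).card
      have hl' : (14:ℤ) ≤ n := by exact_mod_cast hl
      have hr' : (n:ℤ) ≤ 16 := by exact_mod_cast hr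
      nlinarith [sq_nonneg ((n:ℤ) - 15)]
    calc _ ≤ ∑ _u ∈ univ.erase (0:V), (2:ℤ) := Finset.sum_le_sum this
      _ = 126 := by rw [Finset.sum_const, card_erase_univ]; norm_num
  rw [hQ] at hQle
  have : (29:ℤ) ≤ k := by exact_mod_cast hk1
  have : (k:ℤ) ≤ 31 := by exact_mod_cast hk2
  nlinarith

lemma image_add_comp (F : Finset V) (w w' : V) :
    (F.image (· + w)).image (· + w') = F.image (· + (w + w')) := by
  rw [Finset.image_image]
  congr 1
  funext x
  simp [Function.comp, add_assoc]

lemma image_add_zero' (F : Finset V) : F.image (· + (0:V)) = F := by simp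

lemma add_inj_V (w : V) : Function.Injective (fun a : V => a + w) :=
  fun x y h => by simpa using add_right_cancel h

lemma zmod2_one_add (x : ZMod 2) : 1 + x = 1 → x = 0 := by revert x; decide

lemma structure_lemma {F : Finset V} (hF : CapF F) (hk1 : 29 ≤ F.card) (hk2 : F.card ≤ 31) :
    ∃ (W : Submodule (ZMod 2) V) (x : V), x ∉ W ∧ ∀ s ∈ F, x + s ∈ W := by
  obtain ⟨u, hu, hle⟩ := exists_good_u hF hk1 hk2
  set B := F.filter (fun s => Dot u s = 0) with hB
  set A := F.filter (fun s => Dot u s = 1) with hA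
  have hsplit : B.card + A.card = F.card := by
    rw [hB, hA]
    rw [show (F.filter (fun s => Dot u s = 1)) = (F.filter (fun s => ¬ (Dot u s = 0))) from ?_]
    · exact Finset.card_filter_add_card_filter_not _
    · apply Finset.filter_congr
      intro s _
      rcases zmod2_cases (Dot u s) with h | h <;> simp [h]
  rcases B.eq_empty_or_nonempty with hBe | ⟨b0, hb0⟩
  · -- B empty : F avoids the hyperplane of u
    have hne : F.Nonempty := Finset.card_pos.mp (by omega)
    obtain ⟨s0, hs0⟩ := hne
    have hall : ∀ s ∈ F, Dot u s = 1 := by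
      intro s hs
      rcases zmod2_cases (Dot u s) with h | h
      · exact absurd (hBe ▸ Finset.mem_filter.mpr ⟨hs, h⟩) (Finset.notMem_empty s)
      · exact h
    refine ⟨{ carrier := {v : V | Dot u v = 0},
              add_mem' := ?_, zero_mem' := ?_, smul_mem' := ?_}, s0, ?_, ?_⟩
    · intro a b ha hb
      simp only [Set.mem_setOf_eq] at *
      rw [dot_add_right, ha, hb, add_zero]
    · simp only [Set.mem_setOf_eq, dot_zero_right]
    · intro c x hx
      simp only [Set.mem_setOf_eq] at *
      rcases zmod2_cases c with h | h <;> subst h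
      · rw [zero_smul, dot_zero_right]
      · rwa [one_smul]
    · intro hmem
      have : Dot u s0 = 0 := hmem
      rw [hall s0 hs0] at this
      exact one_ne_zero this
    · intro s hs
      show Dot u (s0 + s) = 0
      rw [dot_add_right, hall s0 hs0, hall s hs]
      decide
  · -- main case
    have hb0F : b0 ∈ F := (Finset.mem_filter.mp hb0).1
    have hb0d : Dot u b0 = 0 := (Finset.mem_filter.mp hb0).2
    have hA16 : A.card ≤ 16 := capbound_aff hF hu hb0F hb0d
    have hAcard : A.card = 16 := by omega
    have hBcard : 13 ≤ B.card := by omega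
    set Aff1 := univ.filter (fun v : V => Dot u v = 1) with hAff1def
    have hAff1 : Aff1.card = 32 := card_dot1 hu
    have hAsub : A ⊆ Aff1 := by
      intro a ha
      simp only [hAff1def, mem_filter, mem_univ, true_and]
      exact (Finset.mem_filter.mp ha).2
    set Cs := Aff1 \ A with hCs
    have hCscard : Cs.card = 16 := by
      rw [hCs, Finset.card_sdiff_of_subset hAsub, hAff1, hAcard]
    have hAne : A.Nonempty := Finset.card_pos.mp (by omega)
    obtain ⟨a0, ha0⟩ := hAne
    have ha0F : a0 ∈ F := (Finset.mem_filter.mp ha0).1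
    have ha0d : Dot u a0 = 1 := (Finset.mem_filter.mp ha0).2
    -- each translate of A by an element of B equals Cs
    have key1 : ∀ b ∈ B, A.image (· + b) = Cs := by
      intro b hb
      have hbF : b ∈ F := (Finset.mem_filter.mp hb).1
      have hbd : Dot u b = 0 := (Finset.mem_filter.mp hb).2
      apply Finset.eq_of_subset_of_card_le
      · intro x hx
        simp only [Finset.mem_image] at hx
        obtain ⟨a, ha, rfl⟩ := hx
        have haF : a ∈ F := (Finset.mem_filter.mp ha).1
        have had : Dot u a = 1 := (Finset.mem_filter.mp ha).2
        have hab : a ≠ b := by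
          intro h; rw [h, hbd] at had; exact one_ne_zero had.symm
        rw [hCs, Finset.mem_sdiff]
        constructor
        · simp only [hAff1def, mem_filter, mem_univ, true_and]
          rw [dot_add_right, had, hbd, add_zero]
        · intro hmem
          exact capF_sum_not_mem hF haF hbF hab ((Finset.mem_filter.mp hmem).1)
      · rw [Finset.card_image_of_injective _ (add_inj_V b), hAcard, hCscard]
    set WF := univ.filter (fun w : V => A.image (· + w) = A) with hWFdef
    have hWFmem : ∀ w : V, w ∈ WF ↔ A.image (· + w) = A := by
      intro w; simp [hWFdef]
    have keyW : ∀ b ∈ B, ∀ b' ∈ B, b + b' ∈ WF := by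
      intro b hb b' hb'
      rw [hWFmem]
      calc A.image (· + (b + b')) = (A.image (· + b)).image (· + b') :=
            (image_add_comp A b b').symm
        _ = ((A.image (· + b')).image (· + b')) := by rw [key1 b hb, key1 b' hb']
        _ = A.image (· + (b' + b')) := image_add_comp A b' b'
        _ = A := by rw [Vadd_self, image_add_zero']
    have hb0nW : b0 ∉ WF := by
      rw [hWFmem, key1 b0 hb0]
      intro h
      have : a0 ∈ Cs := h ▸ ha0
      rw [hCs, Finset.mem_sdiff] at this
      exact this.2 ha0
    have hWge : B.card ≤ WF.card := by
      apply Finset.card_le_card_of_injOn (fun b => b0 + b)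
      · intro b hb; exact keyW b0 hb0 b hb
      · intro x _ y _ h
        simpa using add_left_cancel h
    have hWle : WF.card ≤ 16 := by
      rw [← hAcard]
      apply Finset.card_le_card_of_injOn (fun w => a0 + w)
      · intro w hw
        rw [Finset.mem_coe, hWFmem] at hw
        rw [← hw]
        simp only [Finset.mem_coe, Finset.mem_image]
        exact ⟨a0, ha0, by rw [add_comm]⟩
      · intro x _ y _ h
        simpa using add_left_cancel h
    -- the stabilizer submodule
    let Wsub : Submodule (ZMod 2) V :=
      { carrier := {w : V | A.image (· + w) = A},
        add_mem' := by
          intro w w' hw hw'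
          simp only [Set.mem_setOf_eq] at *
          calc A.image (· + (w + w')) = (A.image (· + w)).image (· + w') :=
                (image_add_comp A w w').symm
            _ = A := by rw [hw, hw']
        zero_mem' := by simp only [Set.mem_setOf_eq]; exact image_add_zero' A
        smul_mem' := by
          intro c x hx
          simp only [Set.mem_setOf_eq] at *
          rcases zmod2_cases c with h | h <;> subst h
          · rw [zero_smul]; exact image_add_zero' A
          · rwa [one_smul] }
    have hWiff : ∀ w : V, w ∈ Wsub ↔ w ∈ WF := by
      intro w
      rw [hWFmem]
      exact Iff.rfl
    -- Lagrange: |WF| = 16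
    have hcard : Nat.card ↥Wsub = WF.card := by
      have h1 : Nat.card ↥Wsub = ({w : V | A.image (· + w) = A} : Set V).ncard :=
        Nat.card_coe_set_eq _
      have h2 : ({w : V | A.image (· + w) = A} : Set V) = ↑WF := by
        ext w
        simp only [Set.mem_setOf_eq, Finset.coe_filter, mem_univ, true_and, hWFdef]
      rw [h1, h2, Set.ncard_coe_finset]
    have hdvd : WF.card ∣ 64 := by
      have hdvd0 := AddSubgroup.card_addSubgroup_dvd_card (Wsub.toAddSubgroup)
      have hVcard : Nat.card V = 64 := by rw [Nat.card_eq_fintype_card, card_V]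
      have hsame : Nat.card ↥Wsub.toAddSubgroup = Nat.card ↥Wsub := rfl
      rw [hVcard, hsame, hcard] at hdvd0
      exact hdvd0
    have hW16 : WF.card = 16 := by
      have h13 : 13 ≤ WF.card := le_trans hBcard hWge
      interval_cases h : WF.card <;> omega
    -- A is a coset of WF
    have hAcoset : A = WF.image (fun w => a0 + w) := by
      symm
      apply Finset.eq_of_subset_of_card_le
      · intro x hx
        simp only [Finset.mem_image] at hx
        obtain ⟨w, hw, rfl⟩ := hx
        rw [hWFmem] at hw
        rw [← hw]
        simp only [Finset.mem_image]
        exact ⟨a0, ha0, by rw [add_comm]⟩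
      · rw [Finset.card_image_of_injective _ (fun x y h => by simpa using add_left_cancel h),
          hW16, hAcard]
    have hWker : ∀ w ∈ WF, Dot u w = 0 := by
      intro w hw
      have : a0 + w ∈ A := by
        rw [hAcoset]
        exact Finset.mem_image.mpr ⟨w, hw, rfl⟩
      have hd : Dot u (a0 + w) = 1 := (Finset.mem_filter.mp this).2
      rw [dot_add_right, ha0d] at hd
      exact zmod2_one_add _ hd
    -- assemble the final subspace
    refine ⟨Wsub ⊔ Submodule.span (ZMod 2) {a0 + b0}, a0, ?_, ?_⟩
    · intro hmem
      rw [Submodule.mem_sup] at hmem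
      obtain ⟨y, hy, z, hz, hyz⟩ := hmem
      rw [Submodule.mem_span_singleton] at hz
      obtain ⟨c, rfl⟩ := hz
      rcases zmod2_cases c with h | h <;> subst h
      · rw [zero_smul, add_zero] at hyz
        subst hyz
        have := hWker y ((hWiff y).mp hy)
        rw [ha0d] at this
        exact one_ne_zero this
      · rw [one_smul] at hyz
        have hyb : y = b0 := by
          have h1 : y + ((a0 + b0) + (a0 + b0)) = a0 + (a0 + b0) := by
            rw [← add_assoc, hyz]
          rw [Vadd_self, add_zero, Vadd_cancel] at h1
          exact h1
        rw [hyb] at hy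
        exact hb0nW ((hWiff b0).mp hy)
    · intro s hs
      rcases zmod2_cases (Dot u s) with h | h
      · -- s ∈ B
        have hsB : s ∈ B := Finset.mem_filter.mpr ⟨hs, h⟩
        have h1 : b0 + s ∈ Wsub := (hWiff _).mpr (keyW b0 hb0 s hsB)
        have h2 : (a0 + b0) ∈ Submodule.span (ZMod 2) {a0 + b0} :=
          Submodule.mem_span_singleton_self _
        have heq : a0 + s = (b0 + s) + (a0 + b0) := by
          rw [add_comm (b0+s) (a0+b0), ← add_assoc, add_assoc a0 b0 b0,
            Vadd_self, add_zero]
        rw [heq]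
        exact Submodule.add_mem _ (Submodule.mem_sup_left h1) (Submodule.mem_sup_right h2)
      · -- s ∈ A
        have hsA : s ∈ A := Finset.mem_filter.mpr ⟨hs, h⟩
        rw [hAcoset] at hsA
        simp only [Finset.mem_image] at hsA
        obtain ⟨w, hw, rfl⟩ := hsA
        rw [Vadd_cancel]
        exact Submodule.mem_sup_left ((hWiff w).mpr hw)

lemma finrank_V : Module.finrank (ZMod 2) V = 6 := by rw [Module.finrank_pi]; simp

lemma indep_pair {d2 d3 : V} (h2 : d2 ≠ 0) (h3 : d3 ≠ 0) (h23 : d2 ≠ d3) :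
    LinearIndependent (ZMod 2) ![d2, d3] := by
  rw [LinearIndependent.pair_iff]
  intro s t hst
  rcases zmod2_cases s with hs | hs <;> rcases zmod2_cases t with ht | ht <;>
    subst hs <;> subst ht
  · exact ⟨rfl, rfl⟩
  · exfalso; rw [zero_smul, one_smul, zero_add] at hst; exact h3 hst
  · exfalso; rw [one_smul, zero_smul, add_zero] at hst; exact h2 hst
  · exfalso
    rw [one_smul, one_smul] at hst
    have h := Vadd_cancel d2 d3
    rw [hst, add_zero] at h
    exact h23 h

lemma equiv_fin5_prescribed {α : Type*} [Fintype α] [DecidableEq α]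
    (h : Fintype.card α = 5) (a b : α) (hab : a ≠ b) :
    ∃ σ : Fin 5 ≃ α, σ 0 = a ∧ σ 1 = b := by
  let σ0 : Fin 5 ≃ α := (Fintype.equivFinOfCardEq h).symm
  let σ1 : Fin 5 ≃ α := (Equiv.swap (0 : Fin 5) (σ0.symm a)).trans σ0
  have hσ1 : σ1 0 = a := by simp [σ1, Equiv.swap_apply_left]
  have hj : σ1.symm b ≠ 0 := by
    intro h0
    apply hab
    rw [← hσ1, ← h0, Equiv.apply_symm_apply]
  refine ⟨(Equiv.swap (1 : Fin 5) (σ1.symm b)).trans σ1, ?_, ?_⟩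
  · show σ1 (Equiv.swap 1 (σ1.symm b) 0) = a
    rw [Equiv.swap_apply_of_ne_of_ne (by decide) (Ne.symm hj)]
    exact hσ1
  · show σ1 (Equiv.swap 1 (σ1.symm b) 1) = b
    rw [Equiv.swap_apply_left, Equiv.apply_symm_apply]

lemma adapted_basis (W : Submodule (ZMod 2) V) (hW : Module.finrank (ZMod 2) ↥W = 5)
    {x : V} (hx : x ∉ W) {d2 d3 : V} (h2 : d2 ∈ W) (h3 : d3 ∈ W)
    (hd2 : d2 ≠ 0) (hd3 : d3 ≠ 0) (hdd : d2 ≠ d3) :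
    ∃ b : Module.Basis (Fin 6) (ZMod 2) V, b 0 = x ∧ b 1 = d2 ∧ b 2 = d3 ∧
      Submodule.span (ZMod 2) (Set.range (fun i : Fin 5 => b i.succ)) = W := by
  classical
  set y2 : ↥W := ⟨d2, h2⟩ with hy2
  set y3 : ↥W := ⟨d3, h3⟩ with hy3
  have hy23 : y2 ≠ y3 := fun h => hdd (congrArg Subtype.val h)
  have hyind : LinearIndependent (ZMod 2) ![y2, y3] := by
    apply LinearIndependent.of_comp W.subtype
    have hc : (⇑W.subtype ∘ ![y2, y3]) = ![d2, d3] := by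
      funext i; fin_cases i <;> rfl
    rw [hc]
    exact indep_pair hd2 hd3 hdd
  have hsind : LinearIndepOn (ZMod 2) id (Set.range ![y2, y3]) :=
    hyind.linearIndepOn_id
  letI : Fintype ↥W := Fintype.ofFinite _
  letI : Fintype ↑(hsind.extend (Set.subset_univ _)) := Fintype.ofFinite _
  set bE : Module.Basis ↑(hsind.extend (Set.subset_univ _)) (ZMod 2) ↥W := Module.Basis.extend hsind with hbE
  have hcard5 : Fintype.card ↑(hsind.extend (Set.subset_univ _)) = 5 := by
    rw [← Module.finrank_eq_card_basis bE, hW]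
  have m2 : y2 ∈ hsind.extend (Set.subset_univ _) :=
    hsind.subset_extend _ ⟨0, rfl⟩
  have m3 : y3 ∈ hsind.extend (Set.subset_univ _) :=
    hsind.subset_extend _ ⟨1, rfl⟩
  have hane : (⟨y2, m2⟩ : ↑(hsind.extend (Set.subset_univ _))) ≠ ⟨y3, m3⟩ :=
    fun h => hy23 (congrArg Subtype.val h)
  obtain ⟨σ, hσ0, hσ1⟩ := equiv_fin5_prescribed hcard5 _ _ hane
  set bW : Module.Basis (Fin 5) (ZMod 2) ↥W := bE.reindex σ.symm with hbW
  have hbW0 : bW 0 = y2 := by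
    rw [hbW, Module.Basis.reindex_apply, Equiv.symm_symm, hσ0, hbE, Module.Basis.extend_apply_self]
  have hbW1 : bW 1 = y3 := by
    rw [hbW, Module.Basis.reindex_apply, Equiv.symm_symm, hσ1, hbE, Module.Basis.extend_apply_self]
  set v : Fin 6 → V := Fin.cases x (fun j => ((bW j : ↥W) : V)) with hv
  have hWspan : Submodule.span (ZMod 2) (Set.range (fun j : Fin 5 => v j.succ)) = W := by
    have hcomp : (fun j : Fin 5 => v j.succ) = (⇑W.subtype ∘ ⇑bW) := by
      funext j; rfl
    rw [hcomp, Set.range_comp, Submodule.span_image, bW.span_eq, Submodule.map_top,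
      Submodule.range_subtype]
  have hWle : W ≤ Submodule.span (ZMod 2) (Set.range v) := by
    rw [← hWspan]
    apply Submodule.span_mono
    rintro _ ⟨j, rfl⟩
    exact ⟨j.succ, rfl⟩
  have hxmem : x ∈ Submodule.span (ZMod 2) (Set.range v) :=
    Submodule.subset_span ⟨0, rfl⟩
  have htop : ⊤ ≤ Submodule.span (ZMod 2) (Set.range v) := by
    have hlt : W < W ⊔ Submodule.span (ZMod 2) {x} := by
      apply lt_of_le_of_ne le_sup_left
      intro hEq
      apply hx
      rw [hEq]
      exact Submodule.mem_sup_right (Submodule.mem_span_singleton_self x)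
    have h6 : Module.finrank (ZMod 2) ↥(W ⊔ Submodule.span (ZMod 2) {x}) = 6 := by
      have hlt' := Submodule.finrank_lt_finrank_of_lt hlt
      have hle' := Submodule.finrank_le (W ⊔ Submodule.span (ZMod 2) {x})
      rw [finrank_V] at hle'
      rw [hW] at hlt'
      omega
    have hTop : W ⊔ Submodule.span (ZMod 2) {x} = ⊤ :=
      Submodule.eq_top_of_finrank_eq (by rw [h6, finrank_V])
    rw [← hTop]
    apply sup_le hWle
    rw [Submodule.span_le]
    intro y hy
    rw [Set.mem_singleton_iff] at hy
    subst hy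
    exact hxmem
  have hcards : Fintype.card (Fin 6) = Module.finrank (ZMod 2) V := by
    rw [finrank_V, Fintype.card_fin]
  refine ⟨basisOfTopLeSpanOfCardEqFinrank v htop hcards, ?_, ?_, ?_, ?_⟩
  · rw [coe_basisOfTopLeSpanOfCardEqFinrank]
    rfl
  · rw [coe_basisOfTopLeSpanOfCardEqFinrank]
    show v 1 = d2
    have : v 1 = ((bW 0 : ↥W) : V) := rfl
    rw [this, hbW0]
  · rw [coe_basisOfTopLeSpanOfCardEqFinrank]
    show v 2 = d3
    have : v 2 = ((bW 1 : ↥W) : V) := rfl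
    rw [this, hbW1]
  · rw [coe_basisOfTopLeSpanOfCardEqFinrank]
    exact hWspan

lemma coset_map (Wa Wb : Submodule (ZMod 2) V)
    (hWa : Module.finrank (ZMod 2) ↥Wa = 5) (hWb : Module.finrank (ZMod 2) ↥Wb = 5)
    {p0 q0 d2 d3 e2 e3 : V} (hp0 : p0 ∉ Wa) (hq0 : q0 ∉ Wb)
    (hd2 : d2 ∈ Wa) (hd3 : d3 ∈ Wa) (he2 : e2 ∈ Wb) (he3 : e3 ∈ Wb)
    (hd20 : d2 ≠ 0) (hd30 : d3 ≠ 0) (hdd : d2 ≠ d3)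
    (he20 : e2 ≠ 0) (he30 : e3 ≠ 0) (hee : e2 ≠ e3) :
    ∃ M : V ≃ₗ[ZMod 2] V, M p0 = q0 ∧ M d2 = e2 ∧ M d3 = e3 ∧
      ∀ w : V, w ∈ Wa ↔ M w ∈ Wb := by
  obtain ⟨ba, ha0, ha1, ha2, haspan⟩ := adapted_basis Wa hWa hp0 hd2 hd3 hd20 hd30 hdd
  obtain ⟨bb, hb0, hb1, hb2, hbspan⟩ := adapted_basis Wb hWb hq0 he2 he3 he20 he30 hee
  set M := ba.equiv bb (Equiv.refl _) with hM
  have happ : ∀ i : Fin 6, M (ba i) = bb i := by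
    intro i
    rw [hM, Module.Basis.equiv_apply, Equiv.refl_apply]
  have hmap : Submodule.map (M : V →ₗ[ZMod 2] V) Wa = Wb := by
    rw [← haspan, ← hbspan, ← Submodule.span_image]
    congr 1
    rw [← Set.range_comp]
    apply congrArg
    funext j
    show M (ba j.succ) = bb j.succ
    exact happ j.succ
  refine ⟨M, by rw [← ha0, ← hb0]; exact happ 0,
    by rw [← ha1, ← hb1]; exact happ 1,
    by rw [← ha2, ← hb2]; exact happ 2, ?_⟩
  intro w
  constructor
  · intro hw
    rw [← hmap]
    exact Submodule.mem_map_of_mem hw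
  · intro hw
    rw [← hmap] at hw
    obtain ⟨w', hw', hww⟩ := hw
    have : w' = w := M.injective hww
    rwa [← this]

/-! ### Set-level machinery -/

def Coset (W : Submodule (ZMod 2) V) (x : V) : Set V := {v | x + v ∈ W}

lemma mem_coset {W : Submodule (ZMod 2) V} {x v : V} : v ∈ Coset W x ↔ x + v ∈ W := Iff.rfl

lemma add_pair_cancel (x a b : V) : (x + a) + (x + b) = a + b := by
  have h : (x + a) + (x + b) = (x + x) + (a + b) := by ring
  rw [h, Vadd_self, zero_add]

lemma zero_not_mem_coset {W : Submodule (ZMod 2) V} {x : V} (hx : x ∉ W) :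
    (0 : V) ∉ Coset W x := by
  intro h
  rw [mem_coset, add_zero] at h
  exact hx h

lemma not_mem_of_mem_coset {W : Submodule (ZMod 2) V} {x p : V} (hx : x ∉ W)
    (hp : p ∈ Coset W x) : p ∉ W := by
  intro hpW
  apply hx
  rw [mem_coset] at hp
  have : (x + p) + p ∈ W := W.add_mem hp hpW
  rwa [add_assoc, Vadd_self, add_zero] at this

lemma sum_mem_of_coset {W : Submodule (ZMod 2) V} {x p q : V}
    (hp : p ∈ Coset W x) (hq : q ∈ Coset W x) : p + q ∈ W := by
  rw [mem_coset] at hp hq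
  have := W.add_mem hp hq
  rwa [add_pair_cancel] at this

lemma coset_rebase {W : Submodule (ZMod 2) V} {x p0 : V} (hp0 : p0 ∈ Coset W x) :
    Coset W x = Coset W p0 := by
  rw [mem_coset] at hp0
  ext v
  rw [mem_coset, mem_coset]
  constructor
  · intro hv
    have := W.add_mem hp0 hv
    rwa [add_pair_cancel] at this
  · intro hv
    have := W.add_mem hp0 hv
    have h2 : (x + p0) + (p0 + v) = x + v := by
      rw [show (x + p0) + (p0 + v) = x + ((p0 + p0) + v) by ring, Vadd_self, zero_add]
    rwa [h2] at this

lemma coset_subset_cap {W : Submodule (ZMod 2) V} {x : V} (hx : x ∉ W) {S : Set V}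
    (hsub : S ⊆ Coset W x) : IsCap S := by
  refine ⟨Set.toFinite S, ?_, ?_⟩
  · intro v hv h0
    rw [h0] at hv
    exact zero_not_mem_coset hx (hsub hv)
  · intro a ha b hb c hc _ _ _ h0
    have hm : (x + a) + (x + b) + (x + c) ∈ W :=
      W.add_mem (W.add_mem (hsub ha) (hsub hb)) (hsub hc)
    have hre : (x + a) + (x + b) + (x + c) = (x + x) + (x + (a + b + c)) := by ring
    rw [hre, Vadd_self, zero_add] at hm
    rw [h0, add_zero] at hm
    exact hx hm

lemma card_of_submodule (W : Submodule (ZMod 2) V) :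
    Nat.card ↥W = 2 ^ Module.finrank (ZMod 2) ↥W := by
  letI : Fintype ↥W := Fintype.ofFinite _
  rw [Nat.card_eq_fintype_card, Module.card_fintype (Module.finBasis (ZMod 2) ↥W)]
  simp [ZMod.card]

lemma coset_eq_image (W : Submodule (ZMod 2) V) (x : V) :
    Coset W x = (fun w => x + w) '' (W : Set V) := by
  ext v
  constructor
  · intro hv
    exact ⟨x + v, hv, Vadd_cancel x v⟩
  · rintro ⟨w, hw, rfl⟩
    rw [mem_coset, Vadd_cancel]
    exact hw

lemma coset_ncard {W : Submodule (ZMod 2) V} (hr : Module.finrank (ZMod 2) ↥W = 5) (x : V) :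
    (Coset W x).ncard = 32 := by
  rw [coset_eq_image, Set.ncard_image_of_injective _ (fun a b h => by simpa using add_left_cancel h)]
  have h1 : (W : Set V).ncard = Nat.card ↥W := (Nat.card_coe_set_eq _).symm
  rw [h1, card_of_submodule, hr]
  norm_num

lemma cap_subset_coset {S : Set V} (hS : IsCap S) (hk1 : 29 ≤ S.ncard) (hk2 : S.ncard ≤ 31) :
    ∃ (W : Submodule (ZMod 2) V) (x : V), x ∉ W ∧ S ⊆ Coset W x ∧
      Module.finrank (ZMod 2) ↥W = 5 := by
  classical
  set F := hS.1.toFinset with hFdef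
  have hmemF : ∀ v, v ∈ F ↔ v ∈ S := fun v => hS.1.mem_toFinset
  have hFcard : F.card = S.ncard := by
    rw [Set.ncard_eq_toFinset_card S hS.1]
  have hcapF : CapF F := by
    constructor
    · intro v hv; exact hS.2.1 v ((hmemF v).mp hv)
    · intro a ha b hb c hc
      exact hS.2.2 a ((hmemF a).mp ha) b ((hmemF b).mp hb) c ((hmemF c).mp hc)
  obtain ⟨W, x, hx, hmem⟩ := structure_lemma hcapF (by omega) (by omega)
  have hsub : S ⊆ Coset W x := by
    intro s hs
    exact hmem s ((hmemF s).mpr hs)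
  refine ⟨W, x, hx, hsub, ?_⟩
  -- the dimension is forced
  have hne : W ≠ ⊤ := fun h => hx (h ▸ Submodule.mem_top)
  have hlt : Module.finrank (ZMod 2) ↥W < 6 := by
    have := Submodule.finrank_lt_finrank_of_lt (lt_top_iff_ne_top.mpr hne)
    rwa [finrank_top, finrank_V] at this
  have hge : 29 ≤ 2 ^ Module.finrank (ZMod 2) ↥W := by
    have h1 : S.ncard ≤ (Coset W x).ncard := Set.ncard_le_ncard hsub (Set.toFinite _)
    have h2 : (Coset W x).ncard = Nat.card ↥W := by
      rw [coset_eq_image,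
        Set.ncard_image_of_injective _ (fun a b h => by simpa using add_left_cancel h)]
      exact (Nat.card_coe_set_eq _).symm
    rw [← card_of_submodule, ← h2]
    omega
  by_contra hne5
  have hle4 : Module.finrank (ZMod 2) ↥W ≤ 4 := by omega
  have hpow : (2:ℕ) ^ Module.finrank (ZMod 2) ↥W ≤ 2 ^ 4 :=
    Nat.pow_le_pow_right (by norm_num) hle4
  omega

lemma cap_extends {S : Set V} (hS : IsCap S) (hk1 : 29 ≤ S.ncard) (hk2 : S.ncard ≤ 31) :
    ∃ v : V, v ≠ 0 ∧ v ∉ S ∧ IsCap (insert v S) := by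
  obtain ⟨W, x, hx, hsub, hrank⟩ := cap_subset_coset hS hk1 hk2
  have hccard : (Coset W x).ncard = 32 := coset_ncard hrank x
  have hnsub : ¬ (Coset W x ⊆ S) := by
    intro h
    have := Set.ncard_le_ncard h (Set.toFinite S)
    omega
  obtain ⟨v, hvC, hvS⟩ := Set.not_subset.mp hnsub
  refine ⟨v, ?_, hvS, coset_subset_cap hx ?_⟩
  · intro h0
    rw [h0] at hvC
    exact zero_not_mem_coset hx hvC
  · rw [Set.insert_subset_iff]
    exact ⟨hvC, hsub⟩

lemma image_coset {W W' : Submodule (ZMod 2) V} (M : V ≃ₗ[ZMod 2] V)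
    (hW : ∀ w : V, w ∈ W ↔ M w ∈ W') (p0 : V) :
    ⇑M '' Coset W p0 = Coset W' (M p0) := by
  ext v
  constructor
  · rintro ⟨c, hc, rfl⟩
    rw [mem_coset] at hc ⊢
    rw [← map_add]
    exact (hW _).mp hc
  · intro hv
    refine ⟨M.symm v, ?_, M.apply_symm_apply v⟩
    rw [mem_coset] at hv ⊢
    rw [hW (p0 + M.symm v), map_add, M.apply_symm_apply]
    exact hv

lemma exists_third (W : Submodule (ZMod 2) V) (hr : Module.finrank (ZMod 2) ↥W = 5) (a : V) :
    ∃ w, w ∈ W ∧ w ≠ 0 ∧ w ≠ a := by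
  by_contra hcon
  push_neg at hcon
  have hsub : (W : Set V) ⊆ {0, a} := by
    intro w hw
    by_cases h0 : w = 0
    · exact Or.inl h0
    · exact Or.inr (hcon w hw h0)
  have hle := Set.ncard_le_ncard hsub (Set.toFinite _)
  have h2 : ({0, a} : Set V).ncard ≤ 2 := by
    have := Set.ncard_insert_le (0:V) ({a} : Set V)
    simpa using this
  have h32 : (W : Set V).ncard = 32 := by
    have h1 : (W : Set V).ncard = Nat.card ↥W := (Nat.card_coe_set_eq _).symm
    rw [h1, card_of_submodule, hr]
    norm_num
  omega

lemma neq_of_add_neq_zero {a b : V} (h : a + b ≠ 0) : True := trivial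

lemma add_eq_zero_iff_eq (a b : V) : a + b = 0 ↔ a = b := by
  constructor
  · intro h
    have h2 := congrArg (fun t => a + t) h
    rw [Vadd_cancel, add_zero] at h2
    exact h2.symm
  · intro h; rw [h, Vadd_self]

lemma equiv_end {Wa Wb : Submodule (ZMod 2) V} {x y : V} (hx : x ∉ Wa) (hy : y ∉ Wb)
    {S T : Set V} (hsubS : S ⊆ Coset Wa x) (hsubT : T ⊆ Coset Wb y)
    {p0 q0 : V} (hp0 : p0 ∈ Coset Wa x) (hq0 : q0 ∈ Coset Wb y)
    (M : V ≃ₗ[ZMod 2] V) (hW : ∀ w : V, w ∈ Wa ↔ M w ∈ Wb) (hp0M : M p0 = q0)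
    (hPQ : ⇑M '' (Coset Wa x \ S) = Coset Wb y \ T) :
    ⇑M '' S = T := by
  have hrS : Coset Wa x \ (Coset Wa x \ S) = S := Set.diff_diff_cancel_left hsubS
  have hrT : Coset Wb y \ (Coset Wb y \ T) = T := Set.diff_diff_cancel_left hsubT
  have himg : ⇑M '' Coset Wa x = Coset Wb y := by
    rw [coset_rebase hp0, image_coset M hW p0, hp0M, ← coset_rebase hq0]
  rw [← hrS, Set.image_diff M.injective, himg, hPQ, hrT]

lemma cap_equiv {S T : Set V} (hS : IsCap S) (hT : IsCap T) {k : ℕ}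
    (hk : k = 29 ∨ k = 30 ∨ k = 31) (hSk : S.ncard = k) (hTk : T.ncard = k) :
    ∃ M : V ≃ₗ[ZMod 2] V, ⇑M '' S = T := by
  have hb : 29 ≤ k ∧ k ≤ 31 := by rcases hk with rfl | rfl | rfl <;> omega
  obtain ⟨Wa, x, hx, hsubS, hra⟩ := cap_subset_coset hS (by omega) (by omega)
  obtain ⟨Wb, y, hy, hsubT, hrb⟩ := cap_subset_coset hT (by omega) (by omega)
  have hPcard : (Coset Wa x \ S).ncard = 32 - k := by
    rw [Set.ncard_diff hsubS, coset_ncard hra, hSk]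
  have hQcard : (Coset Wb y \ T).ncard = 32 - k := by
    rw [Set.ncard_diff hsubT, coset_ncard hrb, hTk]
  rcases hk with rfl | rfl | rfl
  · -- k = 29, three missing points
    norm_num at hPcard hQcard
    obtain ⟨p0, p1, p2, h01, h02, h12, hPeq⟩ := Set.ncard_eq_three.mp hPcard
    obtain ⟨q0, q1, q2, g01, g02, g12, hQeq⟩ := Set.ncard_eq_three.mp hQcard
    have hp0C : p0 ∈ Coset Wa x := by
      have : p0 ∈ Coset Wa x \ S := by rw [hPeq]; simp
      exact this.1
    have hp1C : p1 ∈ Coset Wa x := by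
      have : p1 ∈ Coset Wa x \ S := by rw [hPeq]; simp
      exact this.1
    have hp2C : p2 ∈ Coset Wa x := by
      have : p2 ∈ Coset Wa x \ S := by rw [hPeq]; simp
      exact this.1
    have hq0C : q0 ∈ Coset Wb y := by
      have : q0 ∈ Coset Wb y \ T := by rw [hQeq]; simp
      exact this.1
    have hq1C : q1 ∈ Coset Wb y := by
      have : q1 ∈ Coset Wb y \ T := by rw [hQeq]; simp
      exact this.1
    have hq2C : q2 ∈ Coset Wb y := by
      have : q2 ∈ Coset Wb y \ T := by rw [hQeq]; simp
      exact this.1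
    have hd2W : p0 + p1 ∈ Wa := sum_mem_of_coset hp0C hp1C
    have hd3W : p0 + p2 ∈ Wa := sum_mem_of_coset hp0C hp2C
    have he2W : q0 + q1 ∈ Wb := sum_mem_of_coset hq0C hq1C
    have he3W : q0 + q2 ∈ Wb := sum_mem_of_coset hq0C hq2C
    have hd20 : p0 + p1 ≠ 0 := fun h => h01 ((add_eq_zero_iff_eq _ _).mp h)
    have hd30 : p0 + p2 ≠ 0 := fun h => h02 ((add_eq_zero_iff_eq _ _).mp h)
    have he20 : q0 + q1 ≠ 0 := fun h => g01 ((add_eq_zero_iff_eq _ _).mp h)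
    have he30 : q0 + q2 ≠ 0 := fun h => g02 ((add_eq_zero_iff_eq _ _).mp h)
    have hdd : p0 + p1 ≠ p0 + p2 := fun h => h12 (add_left_cancel h)
    have hee : q0 + q1 ≠ q0 + q2 := fun h => g12 (add_left_cancel h)
    obtain ⟨M, hMp0, hMd2, hMd3, hWiff⟩ := coset_map Wa Wb hra hrb
      (not_mem_of_mem_coset hx hp0C) (not_mem_of_mem_coset hy hq0C)
      hd2W hd3W he2W he3W hd20 hd30 hdd he20 he30 hee
    have hMp1 : M p1 = q1 := by
      have h1 : p1 = p0 + (p0 + p1) := (Vadd_cancel p0 p1).symm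
      rw [h1, map_add, hMp0, hMd2, Vadd_cancel]
    have hMp2 : M p2 = q2 := by
      have h1 : p2 = p0 + (p0 + p2) := (Vadd_cancel p0 p2).symm
      rw [h1, map_add, hMp0, hMd3, Vadd_cancel]
    refine ⟨M, equiv_end hx hy hsubS hsubT hp0C hq0C M hWiff hMp0 ?_⟩
    rw [hPeq, hQeq, Set.image_insert_eq, Set.image_insert_eq, Set.image_singleton,
      hMp0, hMp1, hMp2]
  · -- k = 30, two missing points
    norm_num at hPcard hQcard
    obtain ⟨p0, p1, h01, hPeq⟩ := Set.ncard_eq_two.mp hPcard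
    obtain ⟨q0, q1, g01, hQeq⟩ := Set.ncard_eq_two.mp hQcard
    have hp0C : p0 ∈ Coset Wa x := by
      have : p0 ∈ Coset Wa x \ S := by rw [hPeq]; simp
      exact this.1
    have hp1C : p1 ∈ Coset Wa x := by
      have : p1 ∈ Coset Wa x \ S := by rw [hPeq]; simp
      exact this.1
    have hq0C : q0 ∈ Coset Wb y := by
      have : q0 ∈ Coset Wb y \ T := by rw [hQeq]; simp
      exact this.1
    have hq1C : q1 ∈ Coset Wb y := by
      have : q1 ∈ Coset Wb y \ T := by rw [hQeq]; simp
      exact this.1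
    have hd2W : p0 + p1 ∈ Wa := sum_mem_of_coset hp0C hp1C
    have he2W : q0 + q1 ∈ Wb := sum_mem_of_coset hq0C hq1C
    have hd20 : p0 + p1 ≠ 0 := fun h => h01 ((add_eq_zero_iff_eq _ _).mp h)
    have he20 : q0 + q1 ≠ 0 := fun h => g01 ((add_eq_zero_iff_eq _ _).mp h)
    obtain ⟨d3, hd3W, hd30, hd3d2⟩ := exists_third Wa hra (p0 + p1)
    obtain ⟨e3, he3W, he30, he3e2⟩ := exists_third Wb hrb (q0 + q1)
    obtain ⟨M, hMp0, hMd2, hMd3, hWiff⟩ := coset_map Wa Wb hra hrb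
      (not_mem_of_mem_coset hx hp0C) (not_mem_of_mem_coset hy hq0C)
      hd2W hd3W he2W he3W hd20 hd30 (Ne.symm hd3d2) he20 he30 (Ne.symm he3e2)
    have hMp1 : M p1 = q1 := by
      have h1 : p1 = p0 + (p0 + p1) := (Vadd_cancel p0 p1).symm
      rw [h1, map_add, hMp0, hMd2, Vadd_cancel]
    refine ⟨M, equiv_end hx hy hsubS hsubT hp0C hq0C M hWiff hMp0 ?_⟩
    rw [hPeq, hQeq, Set.image_insert_eq, Set.image_singleton, hMp0, hMp1]
  · -- k = 31, one missing point
    have hP1 : (Coset Wa x \ S).ncard = 1 := by omega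
    have hQ1 : (Coset Wb y \ T).ncard = 1 := by omega
    obtain ⟨p0, hPeq⟩ := Set.ncard_eq_one.mp hP1
    obtain ⟨q0, hQeq⟩ := Set.ncard_eq_one.mp hQ1
    have hp0C : p0 ∈ Coset Wa x := by
      have : p0 ∈ Coset Wa x \ S := by rw [hPeq]; simp
      exact this.1
    have hq0C : q0 ∈ Coset Wb y := by
      have : q0 ∈ Coset Wb y \ T := by rw [hQeq]; simp
      exact this.1
    obtain ⟨d2, hd2W, hd20, -⟩ := exists_third Wa hra 0
    obtain ⟨d3, hd3W, hd30, hd3d2⟩ := exists_third Wa hra d2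
    obtain ⟨e2, he2W, he20, -⟩ := exists_third Wb hrb 0
    obtain ⟨e3, he3W, he30, he3e2⟩ := exists_third Wb hrb e2
    obtain ⟨M, hMp0, hMd2, hMd3, hWiff⟩ := coset_map Wa Wb hra hrb
      (not_mem_of_mem_coset hx hp0C) (not_mem_of_mem_coset hy hq0C)
      hd2W hd3W he2W he3W hd20 hd30 (Ne.symm hd3d2) he20 he30 (Ne.symm he3e2)
    refine ⟨M, equiv_end hx hy hsubS hsubT hp0C hq0C M hWiff hMp0 ?_⟩
    rw [hPeq, hQeq, Set.image_singleton, hMp0]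

/-! ### Existence -/

def Aff0 : Set V := {v : V | v 0 = 1}

lemma aff0_cap {S : Set V} (hsub : S ⊆ Aff0) : IsCap S := by
  refine ⟨Set.toFinite S, ?_, ?_⟩
  · intro v hv h0
    have h1 : v 0 = 1 := hsub hv
    rw [h0] at h1
    simp at h1
  · intro a ha b hb c hc _ _ _ h0
    have h1 : (a + b + c) 0 = 1 := by
      have : (a + b + c) 0 = a 0 + b 0 + c 0 := rfl
      rw [this, hsub ha, hsub hb, hsub hc]
      decide
    rw [h0] at h1
    simp at h1

lemma e0_ne : (e 0 : V) ≠ 0 := by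
  intro h
  have := congrFun h 0
  simp [e] at this

lemma aff0_ncard : Aff0.ncard = 32 := by
  have heq : Aff0 = ↑(univ.filter fun v : V => Dot (e 0) v = 1) := by
    ext v
    simp [Aff0, dot_e]
  rw [heq, Set.ncard_coe_finset, card_dot1 e0_ne]

lemma exist_cap (k : ℕ) (hk : k = 29 ∨ k = 30 ∨ k = 31) :
    ∃ S : Set V, IsCap S ∧ S.ncard = k := by
  have m1 : e 0 ∈ Aff0 := by show (e 0) 0 = 1; decide
  have m2 : e 0 + e 1 ∈ Aff0 := by show (e 0 + e 1) 0 = 1; decide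
  have m3 : e 0 + e 2 ∈ Aff0 := by show (e 0 + e 2) 0 = 1; decide
  have d12 : (e 0 : V) ≠ e 0 + e 1 := by decide
  have d13 : (e 0 : V) ≠ e 0 + e 2 := by decide
  have d23 : (e 0 + e 1 : V) ≠ e 0 + e 2 := by decide
  rcases hk with rfl | rfl | rfl
  · refine ⟨Aff0 \ {e 0, e 0 + e 1, e 0 + e 2}, aff0_cap Set.diff_subset, ?_⟩
    rw [Set.ncard_diff (by
      intro v hv
      rcases hv with rfl | rfl | rfl
      exacts [m1, m2, m3]), aff0_ncard,
      Set.ncard_eq_three.mpr ⟨_, _, _, d12, d13, d23, rfl⟩]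
  · refine ⟨Aff0 \ {e 0, e 0 + e 1}, aff0_cap Set.diff_subset, ?_⟩
    rw [Set.ncard_diff (by
      intro v hv
      rcases hv with rfl | rfl
      exacts [m1, m2]), aff0_ncard, Set.ncard_pair d12]
  · refine ⟨Aff0 \ {e 0}, aff0_cap Set.diff_subset, ?_⟩
    rw [Set.ncard_diff (by
      intro v hv
      rcases hv with rfl
      exact m1), aff0_ncard, Set.ncard_singleton]


/-- For each k ∈ {29, 30, 31} there is, up to projective equivalence, exactly one cap
of size k in PG(5,2), and it is incomplete. -/
theorem caps_29_30_31_unique_incomplete :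
    ∀ k ∈ ({29, 30, 31} : Set ℕ),
      (∃ S : Set V, IsCap S ∧ S.ncard = k) ∧
      (∀ S T : Set V, IsCap S → S.ncard = k → IsCap T → T.ncard = k → ProjEquiv S T) ∧
      (∀ S : Set V, IsCap S → S.ncard = k →
        ∃ v : V, v ≠ 0 ∧ v ∉ S ∧ IsCap (insert v S)) := by
  intro k hk
  have hk' : k = 29 ∨ k = 30 ∨ k = 31 := by
    simpa using hk
  refine ⟨exist_cap k hk', ?_, ?_⟩
  · intro S T hS hSk hT hTk
    obtain ⟨M, hM⟩ := cap_equiv hS hT hk' hSk hTk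
    exact ⟨M, hM⟩
  · intro S hS hSk
    have hb : 29 ≤ S.ncard ∧ S.ncard ≤ 31 := by
      rcases hk' with rfl | rfl | rfl <;> omega
    exact cap_extends hS hb.1 hb.2
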